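/- Let A be a real m × n matrix, b ∈ ℝ^m, μ > 0, λ > 0 and γ > 2, and define the SCAD-regularized least squares objective F : ℝ^n → ℝ by F(x) := μ‖Ax − b‖² + Σ_{i=1}^n r_{λ,γ}(x_i). Then for every local minimizer x̄ of F there exist constants c > 0, ε > 0 and η > 0 such that for every x ∈ ℝ^n with ‖x − x̄‖ < ε and F(x̄) < F(x) < F(x̄) + η, every Fréchet subgradient ξ of F at x satisfies ‖ξ‖ ≥ c·(F(x) − F(x̄))^{1/2}. -/

import Mathlib

open scoped RealInnerProductSpace Topology
open Classical in
/-- The SCAD penalty `r_{λ,γ}`. -/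
noncomputable def scadPenalty (lam γ u : ℝ) : ℝ :=
  if |u| ≤ lam then lam * |u|
  else if |u| ≤ γ * lam then (2 * γ * lam * |u| - (u ^ 2 + lam ^ 2)) / (2 * (γ - 1))
  else lam ^ 2 * (γ ^ 2 - 1) / (2 * (γ - 1))

/-- `ξ` is a Fréchet subgradient of `F` at `x`:
`liminf_{y → x, y ≠ x} (F y − F x − ⟪ξ, y − x⟫)/‖y − x‖ ≥ 0`. -/
def IsFrechetSubgradient {n : ℕ} (F : EuclideanSpace ℝ (Fin n) → ℝ)
    (x ξ : EuclideanSpace ℝ (Fin n)) : Prop :=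
  0 ≤ Filter.liminf (fun y => (F y - F x - ⟪ξ, y - x⟫) / ‖y - x‖) (𝓝[≠] x)

section AuxKL
open scoped RealInnerProductSpace Topology
lemma core_quad {n : ℕ} (T : EuclideanSpace ℝ (Fin n) →ₗ[ℝ] EuclideanSpace ℝ (Fin n))
    (hT : ∀ v w, ⟪T v, w⟫ = ⟪v, T w⟫) :
    ∃ C > (0:ℝ), ∀ v, ⟪v, T v⟫ ≤ C * ‖T v‖ ^ 2 := by
  classical
  set K := LinearMap.ker T with hK
  set S : Kᗮ →ₗ[ℝ] EuclideanSpace ℝ (Fin n) := T.comp Kᗮ.subtype with hS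
  have hinj : LinearMap.ker S = ⊥ := by
    rw [LinearMap.ker_eq_bot']
    intro u hu
    have huK : (u : EuclideanSpace ℝ (Fin n)) ∈ K := by
      simpa [hK, LinearMap.mem_ker, hS] using hu
    have := (Submodule.orthogonal_disjoint K).le_bot (x := (u:EuclideanSpace ℝ (Fin n))) ⟨huK, u.2⟩
    exact Subtype.ext (by simpa using this)
  obtain ⟨Ca, hCa, hanti⟩ := S.exists_antilipschitzWith hinj
  refine ⟨Ca, by exact_mod_cast hCa, ?_⟩
  intro v
  set w' := Kᗮ.orthogonalProjectionOnto v with hw'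
  set p := K.orthogonalProjectionOnto v with hp
  have hdec : (p : EuclideanSpace ℝ (Fin n)) + (w' : EuclideanSpace ℝ (Fin n)) = v :=
    K.starProjection_add_starProjection_orthogonal v
  have hTp : T (p : EuclideanSpace ℝ (Fin n)) = 0 := LinearMap.mem_ker.1 p.2
  have hTv : T v = T (w' : EuclideanSpace ℝ (Fin n)) := by
    rw [← hdec, map_add, hTp, zero_add]
  have h1 : ⟪v, T v⟫ = ⟪(w' : EuclideanSpace ℝ (Fin n)), T w'⟫ := by
    rw [← hdec, inner_add_left]
    have : T (↑p + ↑w') = T ↑w' := by rw [map_add, hTp, zero_add]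
    rw [this, ← hT, hTp]
    simp
  have h2 : ‖(w' : EuclideanSpace ℝ (Fin n))‖ ≤ Ca * ‖T v‖ := by
    have := hanti.le_mul_dist w' 0
    simpa [hS, dist_eq_norm, hTv] using this
  calc ⟪v, T v⟫ = ⟪(w' : EuclideanSpace ℝ (Fin n)), T w'⟫ := h1
    _ ≤ ‖(w' : EuclideanSpace ℝ (Fin n))‖ * ‖T (w' : EuclideanSpace ℝ (Fin n))‖ := real_inner_le_norm _ _
    _ ≤ (Ca * ‖T v‖) * ‖T v‖ := by
        rw [← hTv]
        exact mul_le_mul_of_nonneg_right h2 (norm_nonneg _)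
    _ = Ca * ‖T v‖ ^ 2 := by ring

lemma core_mask {n : ℕ} (N : Matrix (Fin n) (Fin n) ℝ) (hN : ∀ i k, N i k = N k i)
    (P : Fin n → Prop) [DecidablePred P] :
    ∃ C > (0:ℝ), ∀ h : EuclideanSpace ℝ (Fin n), (∀ i, ¬ P i → h i = 0) →
      (∑ i, h i * ∑ k, N i k * h k) ≤ C * ∑ i ∈ Finset.univ.filter P, (∑ k, N i k * h k)^2 := by
  classical
  set T : EuclideanSpace ℝ (Fin n) →ₗ[ℝ] EuclideanSpace ℝ (Fin n) :=
    { toFun := fun v => WithLp.toLp 2 (fun i => if P i then ∑ k, N i k * (if P k then v k else 0) else 0)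
      map_add' := by
        intro v w
        ext i
        by_cases hi : P i
        · simp only [hi, if_true, PiLp.add_apply]
          rw [← Finset.sum_add_distrib]
          apply Finset.sum_congr rfl
          intro k _
          by_cases hk : P k <;> simp [hk, mul_add]
        · simp [hi]
      map_smul' := by
        intro c v
        ext i
        by_cases hi : P i
        · simp only [hi, if_true, PiLp.smul_apply, smul_eq_mul, RingHom.id_apply,
            Finset.mul_sum]
          apply Finset.sum_congr rfl
          intro k _
          by_cases hk : P k <;> simp [hk] <;> ring
        · simp [hi] } with hTdef
  have hTapp : ∀ v i, T v i = if P i then ∑ k, N i k * (if P k then v k else 0) else 0 :=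
    fun v i => rfl
  have key1 : ∀ v w : EuclideanSpace ℝ (Fin n), ⟪T v, w⟫ =
      ∑ i, ∑ k, (if P k then v k else 0) * N i k * (if P i then w i else 0) := by
    intro v w
    simp only [PiLp.inner_apply, RCLike.inner_apply, conj_trivial, hTapp]
    apply Finset.sum_congr rfl
    intro i _
    by_cases hi : P i
    · simp only [hi, if_true, Finset.mul_sum]
      exact Finset.sum_congr rfl fun k _ => by ring
    · simp [hi]
  have key2 : ∀ v w : EuclideanSpace ℝ (Fin n), ⟪v, T w⟫ =
      ∑ i, ∑ k, (if P k then w k else 0) * N i k * (if P i then v i else 0) := by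
    intro v w
    simp only [PiLp.inner_apply, RCLike.inner_apply, conj_trivial, hTapp]
    apply Finset.sum_congr rfl
    intro i _
    by_cases hi : P i
    · simp only [hi, if_true, Finset.sum_mul]
      apply Finset.sum_congr rfl
      intro k _
      ring
    · simp [hi]
  have hsym : ∀ v w, ⟪T v, w⟫ = ⟪v, T w⟫ := by
    intro v w
    rw [key1 v w, key2 v w, Finset.sum_comm]
    apply Finset.sum_congr rfl
    intro i _
    apply Finset.sum_congr rfl
    intro k _
    rw [hN k i]
    ring
  obtain ⟨C, hC, hbound⟩ := core_quad T hsym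
  refine ⟨C, hC, ?_⟩
  intro h hsupp
  have hmask : ∀ k, (if P k then h k else 0) = h k := by
    intro k
    by_cases hk : P k
    · simp [hk]
    · simp [hk, hsupp k hk]
  have hTh : ∀ i, T h i = if P i then ∑ k, N i k * h k else 0 := by
    intro i
    rw [hTapp]
    simp only [hmask]
  have e1 : ⟪h, T h⟫ = ∑ i, h i * ∑ k, N i k * h k := by
    simp only [PiLp.inner_apply, RCLike.inner_apply, conj_trivial, hTh]
    apply Finset.sum_congr rfl
    intro i _
    by_cases hi : P i
    · simp [hi, mul_comm]
    · simp [hi, hsupp i hi]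
  have e2 : ‖T h‖ ^ 2 = ∑ i ∈ Finset.univ.filter P, (∑ k, N i k * h k)^2 := by
    rw [← real_inner_self_eq_norm_sq]
    simp only [PiLp.inner_apply, RCLike.inner_apply, conj_trivial, hTh]
    rw [Finset.sum_filter]
    apply Finset.sum_congr rfl
    intro i _
    by_cases hi : P i <;> simp [hi] <;> ring
  calc (∑ i, h i * ∑ k, N i k * h k) = ⟪h, T h⟫ := e1.symm
    _ ≤ C * ‖T h‖ ^ 2 := hbound h
    _ = C * ∑ i ∈ Finset.univ.filter P, (∑ k, N i k * h k)^2 := by rw [e2]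

lemma scad_ev1 (lam γ v : ℝ) (h : |v| ≤ lam) : scadPenalty lam γ v = lam * |v| := by
  unfold scadPenalty; rw [if_pos h]

lemma scad_ev2 (lam γ v : ℝ) (h1 : ¬ |v| ≤ lam) (h2 : |v| ≤ γ * lam) :
    scadPenalty lam γ v = (2 * γ * lam * |v| - (v ^ 2 + lam ^ 2)) / (2 * (γ - 1)) := by
  unfold scadPenalty; rw [if_neg h1, if_pos h2]

lemma scad_ev3 (lam γ v : ℝ) (h1 : ¬ |v| ≤ lam) (h2 : ¬ |v| ≤ γ * lam) :
    scadPenalty lam γ v = lam ^ 2 * (γ ^ 2 - 1) / (2 * (γ - 1)) := by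
  unfold scadPenalty; rw [if_neg h1, if_neg h2]

lemma scad_even (lam γ u : ℝ) : scadPenalty lam γ (-u) = scadPenalty lam γ u := by
  unfold scadPenalty
  rw [abs_neg]
  ring_nf

lemma scad_expand_nonneg (lam γ : ℝ) (hlam : 0 < lam) (hγ : 2 < γ) (u : ℝ) (hu : 0 ≤ u) :
    ∃ ρ > 0, ∃ g lam' a bb : ℝ, ∀ t : ℝ, |t| < ρ →
      scadPenalty lam γ (u + t) =
        scadPenalty lam γ u + g * t + lam' * |t| + a * t ^ 2 + bb * (t * |t|) := by
  have hγ1 : (0:ℝ) < γ - 1 := by linarith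
  have hγ1' : (γ:ℝ) - 1 ≠ 0 := ne_of_gt hγ1
  have hlamγ : lam < γ * lam := by nlinarith
  rcases eq_or_lt_of_le hu with h0 | hpos
  · -- u = 0
    refine ⟨lam, hlam, 0, lam, 0, 0, ?_⟩
    intro t ht
    rw [← h0]
    have h2 : |(0:ℝ) + t| ≤ lam := by simpa using le_of_lt ht
    rw [scad_ev1 lam γ _ h2, scad_ev1 lam γ 0 (by simp [le_of_lt hlam])]
    simp
  rcases lt_trichotomy u lam with hul | hul | hul
  · -- 0 < u < lam
    refine ⟨min u (lam - u), lt_min hpos (by linarith), lam, 0, 0, 0, ?_⟩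
    intro t ht
    have ht1 : |t| < u := lt_of_lt_of_le ht (min_le_left _ _)
    have ht2 : |t| < lam - u := lt_of_lt_of_le ht (min_le_right _ _)
    have h1 : 0 < u + t := by have := neg_lt_of_abs_lt ht1; linarith
    have h2 : |u + t| ≤ lam := by
      rw [abs_of_pos h1]; have := lt_of_abs_lt ht2; linarith
    rw [scad_ev1 lam γ _ h2, scad_ev1 lam γ u (by rw [abs_of_pos hpos]; linarith)]
    rw [abs_of_pos h1, abs_of_pos hpos]
    ring
  · -- u = lam
    subst hul
    refine ⟨u, hpos, u, 0, -1/(4*(γ-1)), -1/(4*(γ-1)), ?_⟩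
    intro t ht
    have hsc : scadPenalty u γ u = u * u := by
      rw [scad_ev1 u γ u (by rw [abs_of_pos hpos]), abs_of_pos hpos]
    rcases le_or_gt t 0 with htn | htp
    · have h1 : 0 < u + t := by have := neg_lt_of_abs_lt ht; linarith
      have h2 : |u + t| ≤ u := by rw [abs_of_pos h1]; linarith
      rw [scad_ev1 u γ _ h2, hsc, abs_of_pos h1, abs_of_nonpos htn]
      field_simp
      ring
    · have htu : t < u := lt_of_abs_lt (by rwa [abs_of_pos htp] at ht ⊢)
      have h1 : ¬ |u + t| ≤ u := by rw [abs_of_pos (by linarith)]; linarith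
      have h2 : |u + t| ≤ γ * u := by rw [abs_of_pos (by linarith)]; nlinarith
      rw [scad_ev2 u γ _ h1 h2, hsc, abs_of_pos (by linarith : (0:ℝ) < u + t),
        abs_of_pos htp]
      field_simp
      ring
  · rcases lt_trichotomy u (γ * lam) with hug | hug | hug
    · -- lam < u < γ lam
      refine ⟨min (u - lam) (γ * lam - u), lt_min (by linarith) (by linarith),
        (γ*lam - u)/(γ-1), 0, -1/(2*(γ-1)), 0, ?_⟩
      intro t ht
      have ht1 : |t| < u - lam := lt_of_lt_of_le ht (min_le_left _ _)
      have ht2 : |t| < γ * lam - u := lt_of_lt_of_le ht (min_le_right _ _)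
      have h1 : lam < u + t := by have := neg_lt_of_abs_lt ht1; linarith
      have h2 : u + t < γ * lam := by have := lt_of_abs_lt ht2; linarith
      have h3 : ¬ |u + t| ≤ lam := by rw [abs_of_pos (by linarith)]; linarith
      have h4 : |u + t| ≤ γ * lam := by rw [abs_of_pos (by linarith)]; linarith
      have h5 : ¬ |u| ≤ lam := by rw [abs_of_pos hpos]; linarith
      have h6 : |u| ≤ γ * lam := by rw [abs_of_pos hpos]; linarith
      rw [scad_ev2 lam γ _ h3 h4, scad_ev2 lam γ u h5 h6]
      rw [abs_of_pos (by linarith : (0:ℝ) < u + t), abs_of_pos hpos]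
      field_simp
      ring
    · -- u = γ lam
      subst hug
      refine ⟨(γ - 1) * lam, by positivity, 0, 0, -1/(4*(γ-1)), 1/(4*(γ-1)), ?_⟩
      intro t ht
      have hsc : scadPenalty lam γ (γ * lam) = lam ^ 2 * (γ ^ 2 - 1) / (2 * (γ - 1)) := by
        rw [scad_ev2 lam γ _ (by rw [abs_of_pos hpos]; linarith) (by rw [abs_of_pos hpos])]
        rw [abs_of_pos hpos]
        field_simp
        ring
      rcases le_or_gt t 0 with htn | htp
      · have h1 : lam < γ * lam + t := by
          have := neg_lt_of_abs_lt ht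
          nlinarith
        have h3 : ¬ |γ * lam + t| ≤ lam := by rw [abs_of_pos (by linarith)]; linarith
        have h4 : |γ * lam + t| ≤ γ * lam := by rw [abs_of_pos (by linarith)]; linarith
        rw [scad_ev2 lam γ _ h3 h4, hsc]
        rw [abs_of_pos (by linarith : (0:ℝ) < γ * lam + t), abs_of_nonpos htn]
        field_simp
        ring
      · have h1 : γ * lam < γ * lam + t := by linarith
        have h3 : ¬ |γ * lam + t| ≤ lam := by rw [abs_of_pos (by linarith)]; linarith
        have h4 : ¬ |γ * lam + t| ≤ γ * lam := by rw [abs_of_pos (by linarith)]; linarith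
        rw [scad_ev3 lam γ _ h3 h4, hsc, abs_of_pos htp]
        ring
    · -- γ lam < u
      refine ⟨u - γ * lam, by linarith, 0, 0, 0, 0, ?_⟩
      intro t ht
      have h1 : γ * lam < u + t := by have := neg_lt_of_abs_lt ht; linarith
      have h3 : ¬ |u + t| ≤ lam := by rw [abs_of_pos (by linarith)]; linarith
      have h4 : ¬ |u + t| ≤ γ * lam := by rw [abs_of_pos (by linarith)]; linarith
      have h5 : ¬ |u| ≤ lam := by rw [abs_of_pos hpos]; linarith
      have h6 : ¬ |u| ≤ γ * lam := by rw [abs_of_pos hpos]; linarith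
      rw [scad_ev3 lam γ _ h3 h4, scad_ev3 lam γ u h5 h6]
      ring

lemma scad_expand (lam γ : ℝ) (hlam : 0 < lam) (hγ : 2 < γ) (u : ℝ) :
    ∃ ρ > 0, ∃ g lam' a bb : ℝ, ∀ t : ℝ, |t| < ρ →
      scadPenalty lam γ (u + t) =
        scadPenalty lam γ u + g * t + lam' * |t| + a * t ^ 2 + bb * (t * |t|) := by
  rcases le_or_gt 0 u with hu | hu
  · exact scad_expand_nonneg lam γ hlam hγ u hu
  · obtain ⟨ρ, hρ, g, lam', a, bb, hexp⟩ :=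
      scad_expand_nonneg lam γ hlam hγ (-u) (by linarith)
    refine ⟨ρ, hρ, -g, lam', a, -bb, ?_⟩
    intro t ht
    have h := hexp (-t) (by rwa [abs_neg])
    rw [show -u + -t = -(u + t) by ring, scad_even, scad_even] at h
    rw [h, abs_neg]
    ring

lemma eunorm_sq {n : ℕ} (v : EuclideanSpace ℝ (Fin n)) : ‖v‖ ^ 2 = ∑ i, (v i) ^ 2 := by
  rw [← real_inner_self_eq_norm_sq]
  simp only [PiLp.inner_apply, RCLike.inner_apply, conj_trivial]
  exact Finset.sum_congr rfl fun i _ => (sq (v i)).symm ▸ by ring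

lemma coord_abs_le_norm {n : ℕ} (v : EuclideanSpace ℝ (Fin n)) (i : Fin n) :
    |v i| ≤ ‖v‖ := by
  have h1 : |v i| = Real.sqrt ((v i) ^ 2) := (Real.sqrt_sq_eq_abs _).symm
  rw [h1, EuclideanSpace.norm_eq]
  apply Real.sqrt_le_sqrt
  have : (v i) ^ 2 ≤ ∑ k, ‖v k‖ ^ 2 := by
    have := Finset.single_le_sum (f := fun k => ‖v k‖ ^ 2)
      (fun k _ => by positivity) (Finset.mem_univ i)
    simpa [Real.norm_eq_abs, sq_abs] using this
  exact this

lemma key_sigma {n : ℕ} (G : Fin n → ℝ) (N : Matrix (Fin n) (Fin n) ℝ)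
    (hN : ∀ i k, N i k = N k i) (σ : Fin n → SignType) :
    ∃ c > (0:ℝ), ∃ ε > (0:ℝ), ∀ (h ξ : EuclideanSpace ℝ (Fin n)) (v : ℝ),
      (∀ i, SignType.sign (h i) = σ i) → ‖h‖ < ε → 0 < v → v < 1 →
      v = (∑ i, G i * h i) + 2⁻¹ * ∑ i, h i * ∑ k, N i k * h k →
      (∀ i, h i ≠ 0 → ξ i = G i + ∑ k, N i k * h k) →
      c * Real.sqrt v ≤ ‖ξ‖ := by
  classical
  by_cases hcase : ∃ i, σ i ≠ 0 ∧ G i ≠ 0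
  · obtain ⟨i0, hσ0, hG0⟩ := hcase
    set δ := |G i0| with hδ
    have hδpos : 0 < δ := abs_pos.2 hG0
    set K := (∑ k, |N i0 k|) + 1 with hK
    have hKpos : 0 < K := by positivity
    refine ⟨δ/2, by positivity, min 1 (δ/(2*K)), by positivity, ?_⟩
    intro h ξ v hsign hnorm hv0 hv1 hveq hξ
    have hhi0 : h i0 ≠ 0 := by
      intro hz
      apply hσ0
      rw [← hsign i0, hz, sign_zero]
    have hξi0 : ξ i0 = G i0 + ∑ k, N i0 k * h k := hξ i0 hhi0
    have hsmall : |∑ k, N i0 k * h k| ≤ (K - 1) * ‖h‖ := by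
      calc |∑ k, N i0 k * h k| ≤ ∑ k, |N i0 k * h k| := Finset.abs_sum_le_sum_abs _ _
        _ ≤ ∑ k, |N i0 k| * ‖h‖ := by
            apply Finset.sum_le_sum
            intro k _
            rw [abs_mul]
            exact mul_le_mul_of_nonneg_left (coord_abs_le_norm h k) (abs_nonneg _)
        _ = (K - 1) * ‖h‖ := by rw [hK]; rw [← Finset.sum_mul]; ring_nf
    have hnorm' : ‖h‖ < δ/(2*K) := lt_of_lt_of_le hnorm (min_le_right _ _)
    have hsmall2 : |∑ k, N i0 k * h k| ≤ δ/2 := by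
      have hKn : (K - 1) * ‖h‖ ≤ K * ‖h‖ := by
        apply mul_le_mul_of_nonneg_right (by linarith) (norm_nonneg _)
      have : K * ‖h‖ ≤ K * (δ/(2*K)) := mul_le_mul_of_nonneg_left (le_of_lt hnorm') (le_of_lt hKpos)
      have hKK : K * (δ/(2*K)) = δ/2 := by field_simp
      exact le_trans hsmall (le_trans hKn (le_trans this (le_of_eq hKK)))
    have hxi_big : δ/2 ≤ |ξ i0| := by
      rw [hξi0]
      have htri := abs_sub_abs_le_abs_sub (G i0) (G i0 + ∑ k, N i0 k * h k)
      have heq : G i0 - (G i0 + ∑ k, N i0 k * h k) = -(∑ k, N i0 k * h k) := by ring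
      rw [heq, abs_neg] at htri
      linarith
    have hsq : Real.sqrt v ≤ 1 := Real.sqrt_le_one.mpr (le_of_lt hv1)
    calc δ/2 * Real.sqrt v ≤ δ/2 * 1 := by
          apply mul_le_mul_of_nonneg_left hsq (by positivity)
      _ = δ/2 := mul_one _
      _ ≤ |ξ i0| := hxi_big
      _ ≤ ‖ξ‖ := coord_abs_le_norm ξ i0
  · push_neg at hcase
    obtain ⟨C, hC, hmask⟩ := core_mask N hN (fun i => σ i ≠ 0)
    refine ⟨Real.sqrt (2/C), Real.sqrt_pos.2 (by positivity), 1, one_pos, ?_⟩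
    intro h ξ v hsign hnorm hv0 hv1 hveq hξ
    have hsupp : ∀ i, ¬ (σ i ≠ 0) → h i = 0 := by
      intro i hi
      push_neg at hi
      have := hsign i
      rw [hi] at this
      exact sign_eq_zero_iff.1 this
    have hlin : (∑ i, G i * h i) = 0 := by
      apply Finset.sum_eq_zero
      intro i _
      by_cases hi : σ i ≠ 0
      · rw [hcase i hi, zero_mul]
      · rw [hsupp i hi, mul_zero]
    have hv2 : v ≤ 2⁻¹ * (C * ∑ i ∈ Finset.univ.filter (fun i => σ i ≠ 0), (∑ k, N i k * h k)^2) := by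
      rw [hveq, hlin, zero_add]
      have := hmask h hsupp
      linarith
    have hxieq : ∀ i ∈ Finset.univ.filter (fun i => σ i ≠ 0), (∑ k, N i k * h k)^2 = (ξ i)^2 := by
      intro i hi
      rw [Finset.mem_filter] at hi
      have hhi : h i ≠ 0 := by
        intro hz
        exact hi.2 (by rw [← hsign i, hz, sign_zero])
      rw [hξ i hhi, hcase i hi.2, zero_add]
    have hsum_le : ∑ i ∈ Finset.univ.filter (fun i => σ i ≠ 0), (∑ k, N i k * h k)^2 ≤ ‖ξ‖^2 := by
      rw [Finset.sum_congr rfl hxieq, eunorm_sq]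
      apply Finset.sum_le_sum_of_subset_of_nonneg (Finset.filter_subset _ _)
      intro i _ _
      positivity
    have hfin : v ≤ C/2 * ‖ξ‖^2 := by
      have h2 : 2⁻¹ * (C * ∑ i ∈ Finset.univ.filter (fun i => σ i ≠ 0), (∑ k, N i k * h k)^2)
          ≤ 2⁻¹ * (C * ‖ξ‖^2) := by
        apply mul_le_mul_of_nonneg_left _ (by norm_num)
        exact mul_le_mul_of_nonneg_left hsum_le (le_of_lt hC)
      calc v ≤ _ := hv2
        _ ≤ 2⁻¹ * (C * ‖ξ‖^2) := h2
        _ = C/2 * ‖ξ‖^2 := by ring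
    -- conclude
    have hCpos : (0:ℝ) < 2/C := by positivity
    have hsq : (Real.sqrt (2/C) * Real.sqrt v)^2 ≤ ‖ξ‖^2 := by
      rw [mul_pow, Real.sq_sqrt (le_of_lt hCpos), Real.sq_sqrt (le_of_lt hv0)]
      rw [div_mul_eq_mul_div, div_le_iff₀ hC]
      nlinarith [hfin]
    have h1 : Real.sqrt (2/C) * Real.sqrt v ≥ 0 := by positivity
    nlinarith [hsq, norm_nonneg ξ, h1]

noncomputable def modelF {n m : ℕ} (A : Matrix (Fin m) (Fin n) ℝ) (μ : ℝ)
    (g' lam' a bb : Fin n → ℝ) (h : Fin n → ℝ) : ℝ :=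
  (∑ i, (g' i * h i + lam' i * |h i| + a i * (h i)^2 + bb i * (h i * |h i|)))
    + μ * ∑ j, (∑ k, A j k * h k)^2

lemma modelF_eq {n m : ℕ} (A : Matrix (Fin m) (Fin n) ℝ) (bv : Fin m → ℝ) (μ lam γ : ℝ)
    (xbar : Fin n → ℝ) (ρ g lam' a bb : Fin n → ℝ)
    (hexp : ∀ i, ∀ t : ℝ, |t| < ρ i → scadPenalty lam γ (xbar i + t) =
      scadPenalty lam γ (xbar i) + g i * t + lam' i * |t| + a i * t ^ 2 + bb i * (t * |t|))
    (gA : Fin n → ℝ)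
    (hgA : ∀ i, gA i = 2 * μ * ∑ j, ((∑ k, A j k * xbar k) - bv j) * A j i)
    (y : Fin n → ℝ) (hy : ∀ i, |y i - xbar i| < ρ i) :
    (μ * ∑ j, ((∑ k, A j k * y k) - bv j) ^ 2 + ∑ i, scadPenalty lam γ (y i))
      = (μ * ∑ j, ((∑ k, A j k * xbar k) - bv j) ^ 2 + ∑ i, scadPenalty lam γ (xbar i))
        + modelF A μ (fun i => gA i + g i) lam' a bb (fun i => y i - xbar i) := by
  have hscad : ∑ i, scadPenalty lam γ (y i) = ∑ i, (scadPenalty lam γ (xbar i)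
      + g i * (y i - xbar i) + lam' i * |y i - xbar i| + a i * (y i - xbar i) ^ 2
      + bb i * ((y i - xbar i) * |y i - xbar i|)) := by
    apply Finset.sum_congr rfl
    intro i _
    have := hexp i (y i - xbar i) (hy i)
    rw [show xbar i + (y i - xbar i) = y i by ring] at this
    exact this
  have hquad : ∀ j, (∑ k, A j k * y k) = (∑ k, A j k * xbar k) + (∑ k, A j k * (y k - xbar k)) := by
    intro j
    rw [← Finset.sum_add_distrib]
    exact Finset.sum_congr rfl fun k _ => by ring
  have hsq : ∑ j, ((∑ k, A j k * y k) - bv j) ^ 2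
      = ∑ j, (((∑ k, A j k * xbar k) - bv j) ^ 2
        + 2 * ((∑ k, A j k * xbar k) - bv j) * (∑ k, A j k * (y k - xbar k))
        + (∑ k, A j k * (y k - xbar k)) ^ 2) := by
    apply Finset.sum_congr rfl
    intro j _
    rw [hquad j]
    ring
  have hcross : μ * ∑ j, 2 * ((∑ k, A j k * xbar k) - bv j) * (∑ k, A j k * (y k - xbar k))
      = ∑ i, gA i * (y i - xbar i) := by
    have e1 : ∀ j, 2 * ((∑ k, A j k * xbar k) - bv j) * (∑ k, A j k * (y k - xbar k))
        = ∑ k, 2 * ((∑ k', A j k' * xbar k') - bv j) * A j k * (y k - xbar k) := by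
      intro j
      rw [Finset.mul_sum]
      exact Finset.sum_congr rfl fun k _ => by ring
    calc μ * ∑ j, 2 * ((∑ k, A j k * xbar k) - bv j) * (∑ k, A j k * (y k - xbar k))
        = μ * ∑ j, ∑ k, 2 * ((∑ k', A j k' * xbar k') - bv j) * A j k * (y k - xbar k) := by
          rw [Finset.sum_congr rfl fun j _ => e1 j]
      _ = ∑ k, ∑ j, μ * (2 * ((∑ k', A j k' * xbar k') - bv j) * A j k * (y k - xbar k)) := by
          rw [Finset.mul_sum]
          rw [Finset.sum_congr rfl fun j (_ : j ∈ Finset.univ) => Finset.mul_sum _ _ _]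
          exact Finset.sum_comm
      _ = ∑ i, gA i * (y i - xbar i) := by
          apply Finset.sum_congr rfl
          intro k _
          rw [hgA k, Finset.mul_sum, Finset.sum_mul]
          exact Finset.sum_congr rfl fun j _ => by ring
  rw [hscad, hsq]
  unfold modelF
  simp only [Finset.sum_add_distrib, mul_add, add_mul]
  rw [← hcross]
  ring

lemma model_lip {n m : ℕ} (A : Matrix (Fin m) (Fin n) ℝ) (μ : ℝ) (hμ : 0 ≤ μ)
    (g' lam' a bb : Fin n → ℝ) :
    ∃ L : ℝ, ∀ h k : Fin n → ℝ, (∀ i, |h i| ≤ 1) → (∀ i, |k i| ≤ 1) →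
      ∀ d : ℝ, 0 ≤ d → (∀ i, |k i - h i| ≤ d) →
      |modelF A μ g' lam' a bb k - modelF A μ g' lam' a bb h| ≤ L * d := by
  refine ⟨(∑ i, (|g' i| + |lam' i| + 2*|a i| + 2*|bb i|)) + μ * ∑ j, 2*(∑ c, |A j c|)^2, ?_⟩
  intro h k hh hk d hd hkh
  have hphi : ∀ i : Fin n,
      |(g' i * k i + lam' i * |k i| + a i * (k i)^2 + bb i * (k i * |k i|))
        - (g' i * h i + lam' i * |h i| + a i * (h i)^2 + bb i * (h i * |h i|))|
        ≤ (|g' i| + |lam' i| + 2*|a i| + 2*|bb i|) * d := by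
    intro i
    have hid : (g' i * k i + lam' i * |k i| + a i * (k i)^2 + bb i * (k i * |k i|))
        - (g' i * h i + lam' i * |h i| + a i * (h i)^2 + bb i * (h i * |h i|))
        = g' i * (k i - h i) + lam' i * (|k i| - |h i|) + a i * ((k i + h i) * (k i - h i))
          + bb i * (k i * (|k i| - |h i|) + |h i| * (k i - h i)) := by ring
    rw [hid]
    have t1 : |g' i * (k i - h i)| ≤ |g' i| * d := by
      rw [abs_mul]
      exact mul_le_mul_of_nonneg_left (hkh i) (abs_nonneg _)
    have habs : |(|k i| - |h i|)| ≤ d := le_trans (abs_abs_sub_abs_le_abs_sub _ _) (hkh i)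
    have t2 : |lam' i * (|k i| - |h i|)| ≤ |lam' i| * d := by
      rw [abs_mul]
      exact mul_le_mul_of_nonneg_left habs (abs_nonneg _)
    have t3 : |a i * ((k i + h i) * (k i - h i))| ≤ 2 * |a i| * d := by
      rw [abs_mul, abs_mul]
      have h1 : |k i + h i| ≤ 2 := le_trans (abs_add_le _ _) (by linarith [hh i, hk i])
      calc |a i| * (|k i + h i| * |k i - h i|) ≤ |a i| * (2 * d) := by
            apply mul_le_mul_of_nonneg_left _ (abs_nonneg _)
            exact mul_le_mul h1 (hkh i) (abs_nonneg _) (by norm_num)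
        _ = 2 * |a i| * d := by ring
    have t4 : |bb i * (k i * (|k i| - |h i|) + |h i| * (k i - h i))| ≤ 2 * |bb i| * d := by
      rw [abs_mul]
      have h1 : |k i * (|k i| - |h i|) + |h i| * (k i - h i)| ≤ 2 * d := by
        calc |k i * (|k i| - |h i|) + |h i| * (k i - h i)|
            ≤ |k i * (|k i| - |h i|)| + |(|h i| * (k i - h i))| := abs_add_le _ _
          _ = |k i| * |(|k i| - |h i|)| + |(|h i|)| * |k i - h i| := by rw [abs_mul, abs_mul]
          _ ≤ 1 * d + 1 * d := by
              apply add_le_add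
              · exact mul_le_mul (hk i) habs (abs_nonneg _) (by norm_num)
              · rw [abs_abs]
                exact mul_le_mul (hh i) (hkh i) (abs_nonneg _) (by norm_num)
          _ = 2 * d := by ring
      calc |bb i| * |k i * (|k i| - |h i|) + |h i| * (k i - h i)| ≤ |bb i| * (2*d) :=
            mul_le_mul_of_nonneg_left h1 (abs_nonneg _)
        _ = 2 * |bb i| * d := by ring
    calc |g' i * (k i - h i) + lam' i * (|k i| - |h i|) + a i * ((k i + h i) * (k i - h i))
          + bb i * (k i * (|k i| - |h i|) + |h i| * (k i - h i))|
        ≤ |g' i * (k i - h i) + lam' i * (|k i| - |h i|) + a i * ((k i + h i) * (k i - h i))|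
          + |bb i * (k i * (|k i| - |h i|) + |h i| * (k i - h i))| := abs_add_le _ _
      _ ≤ (|g' i * (k i - h i)| + |lam' i * (|k i| - |h i|)|
            + |a i * ((k i + h i) * (k i - h i))|)
          + |bb i * (k i * (|k i| - |h i|) + |h i| * (k i - h i))| := by
          have := abs_add_le (g' i * (k i - h i) + lam' i * (|k i| - |h i|))
            (a i * ((k i + h i) * (k i - h i)))
          have h2 := abs_add_le (g' i * (k i - h i)) (lam' i * (|k i| - |h i|))
          linarith
      _ ≤ (|g' i| + |lam' i| + 2*|a i| + 2*|bb i|) * d := by linarith [t1, t2, t3, t4]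
  have hquad : ∀ j : Fin m, |(∑ c, A j c * k c)^2 - (∑ c, A j c * h c)^2|
      ≤ (2*(∑ c, |A j c|)^2) * d := by
    intro j
    have hR : (0:ℝ) ≤ ∑ c, |A j c| := Finset.sum_nonneg fun c _ => abs_nonneg _
    have hdiff : |(∑ c, A j c * k c) - (∑ c, A j c * h c)| ≤ (∑ c, |A j c|) * d := by
      have : (∑ c, A j c * k c) - (∑ c, A j c * h c) = ∑ c, A j c * (k c - h c) := by
        rw [← Finset.sum_sub_distrib]
        exact Finset.sum_congr rfl fun c _ => by ring
      rw [this]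
      calc |∑ c, A j c * (k c - h c)| ≤ ∑ c, |A j c * (k c - h c)| :=
            Finset.abs_sum_le_sum_abs _ _
        _ ≤ ∑ c, |A j c| * d := by
            apply Finset.sum_le_sum
            intro c _
            rw [abs_mul]
            exact mul_le_mul_of_nonneg_left (hkh c) (abs_nonneg _)
        _ = (∑ c, |A j c|) * d := by rw [Finset.sum_mul]
    have hsumbound : ∀ w : Fin n → ℝ, (∀ i, |w i| ≤ 1) → |∑ c, A j c * w c| ≤ ∑ c, |A j c| := by
      intro w hw
      calc |∑ c, A j c * w c| ≤ ∑ c, |A j c * w c| := Finset.abs_sum_le_sum_abs _ _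
        _ ≤ ∑ c, |A j c| := by
            apply Finset.sum_le_sum
            intro c _
            rw [abs_mul]
            calc |A j c| * |w c| ≤ |A j c| * 1 := mul_le_mul_of_nonneg_left (hw c) (abs_nonneg _)
              _ = |A j c| := mul_one _
    have hplus : |(∑ c, A j c * k c) + (∑ c, A j c * h c)| ≤ 2 * ∑ c, |A j c| := by
      calc |(∑ c, A j c * k c) + (∑ c, A j c * h c)|
          ≤ |∑ c, A j c * k c| + |∑ c, A j c * h c| := abs_add_le _ _
        _ ≤ 2 * ∑ c, |A j c| := by linarith [hsumbound k hk, hsumbound h hh]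
    have hid2 : (∑ c, A j c * k c)^2 - (∑ c, A j c * h c)^2
        = ((∑ c, A j c * k c) + (∑ c, A j c * h c)) * ((∑ c, A j c * k c) - (∑ c, A j c * h c)) := by
      ring
    rw [hid2, abs_mul]
    calc |(∑ c, A j c * k c) + (∑ c, A j c * h c)| * |(∑ c, A j c * k c) - (∑ c, A j c * h c)|
        ≤ (2 * ∑ c, |A j c|) * ((∑ c, |A j c|) * d) := by
          apply mul_le_mul hplus hdiff (abs_nonneg _)
          positivity
      _ = (2*(∑ c, |A j c|)^2) * d := by ring
  have hsplit : modelF A μ g' lam' a bb k - modelF A μ g' lam' a bb h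
      = (∑ i, ((g' i * k i + lam' i * |k i| + a i * (k i)^2 + bb i * (k i * |k i|))
          - (g' i * h i + lam' i * |h i| + a i * (h i)^2 + bb i * (h i * |h i|))))
        + μ * ∑ j, ((∑ c, A j c * k c)^2 - (∑ c, A j c * h c)^2) := by
    unfold modelF
    rw [Finset.sum_sub_distrib, Finset.sum_sub_distrib]
    ring
  rw [hsplit]
  calc |(∑ i, ((g' i * k i + lam' i * |k i| + a i * (k i)^2 + bb i * (k i * |k i|))
          - (g' i * h i + lam' i * |h i| + a i * (h i)^2 + bb i * (h i * |h i|))))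
        + μ * ∑ j, ((∑ c, A j c * k c)^2 - (∑ c, A j c * h c)^2)|
      ≤ |∑ i, ((g' i * k i + lam' i * |k i| + a i * (k i)^2 + bb i * (k i * |k i|))
          - (g' i * h i + lam' i * |h i| + a i * (h i)^2 + bb i * (h i * |h i|)))|
        + |μ * ∑ j, ((∑ c, A j c * k c)^2 - (∑ c, A j c * h c)^2)| := abs_add_le _ _
    _ ≤ (∑ i, (|g' i| + |lam' i| + 2*|a i| + 2*|bb i|)) * d
        + μ * ((∑ j, 2*(∑ c, |A j c|)^2) * d) := by
        apply add_le_add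
        · calc |∑ i, ((g' i * k i + lam' i * |k i| + a i * (k i)^2 + bb i * (k i * |k i|))
              - (g' i * h i + lam' i * |h i| + a i * (h i)^2 + bb i * (h i * |h i|)))|
              ≤ ∑ i, |((g' i * k i + lam' i * |k i| + a i * (k i)^2 + bb i * (k i * |k i|))
              - (g' i * h i + lam' i * |h i| + a i * (h i)^2 + bb i * (h i * |h i|)))| :=
                Finset.abs_sum_le_sum_abs _ _
            _ ≤ ∑ i, (|g' i| + |lam' i| + 2*|a i| + 2*|bb i|) * d :=
                Finset.sum_le_sum fun i _ => hphi i
            _ = (∑ i, (|g' i| + |lam' i| + 2*|a i| + 2*|bb i|)) * d := by rw [Finset.sum_mul]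
        · rw [abs_mul, abs_of_nonneg hμ]
          apply mul_le_mul_of_nonneg_left _ hμ
          calc |∑ j, ((∑ c, A j c * k c)^2 - (∑ c, A j c * h c)^2)|
              ≤ ∑ j, |((∑ c, A j c * k c)^2 - (∑ c, A j c * h c)^2)| :=
                Finset.abs_sum_le_sum_abs _ _
            _ ≤ ∑ j, (2*(∑ c, |A j c|)^2) * d := Finset.sum_le_sum fun j _ => hquad j
            _ = (∑ j, 2*(∑ c, |A j c|)^2) * d := by rw [Finset.sum_mul]
    _ = ((∑ i, (|g' i| + |lam' i| + 2*|a i| + 2*|bb i|)) + μ * ∑ j, 2*(∑ c, |A j c|)^2) * d := by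
        ring

lemma model_line {n m : ℕ} (A : Matrix (Fin m) (Fin n) ℝ) (μ : ℝ)
    (g' lam' a bb : Fin n → ℝ) (h : Fin n → ℝ) (i : Fin n) (t : ℝ)
    (hne : h i ≠ 0) (ht : |t| < |h i|) :
    modelF A μ g' lam' a bb (fun k => h k + t * (if k = i then 1 else 0))
      = modelF A μ g' lam' a bb h
        + (g' i + lam' i * (SignType.sign (h i) : ℝ) + 2 * a i * h i + 2 * bb i * |h i|
            + 2 * μ * ∑ j, (∑ k, A j k * h k) * A j i) * t
        + (a i + bb i * (SignType.sign (h i) : ℝ) + μ * ∑ j, (A j i)^2) * t^2 := by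
  classical
  set s : ℝ := (SignType.sign (h i) : ℝ) with hs
  have habs2 : |h i| = s * h i := by rw [hs, mul_comm, ← sign_mul_self (h i), mul_comm]
  have habs1 : |h i + t| = s * (h i + t) := by
    rcases lt_trichotomy (h i) 0 with hlt | heq | hgt
    · have hsv : s = -1 := by rw [hs, sign_neg hlt]; simp
      have h2 : h i + t < 0 := by
        have := lt_of_abs_lt ht
        rw [abs_of_neg hlt] at ht
        have := lt_of_abs_lt ht
        linarith [neg_lt_of_abs_lt ht, lt_of_abs_lt ht]
      rw [abs_of_neg h2, hsv]; ring
    · exact absurd heq hne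
    · have hsv : s = 1 := by rw [hs, sign_pos hgt]; simp
      have h2 : 0 < h i + t := by
        rw [abs_of_pos hgt] at ht
        linarith [neg_lt_of_abs_lt ht]
      rw [abs_of_pos h2, hsv]; ring
  have hnew : ∀ k, (h k + t * (if k = i then 1 else 0)) = if k = i then h i + t else h k := by
    intro k
    by_cases hk : k = i
    · subst hk; simp
    · simp [hk]
  -- penalty sum
  have hpen : (∑ k, (g' k * (h k + t * (if k = i then 1 else 0))
        + lam' k * |h k + t * (if k = i then 1 else 0)|
        + a k * (h k + t * (if k = i then 1 else 0))^2
        + bb k * ((h k + t * (if k = i then 1 else 0)) * |h k + t * (if k = i then 1 else 0)|)))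
      = (∑ k, (g' k * h k + lam' k * |h k| + a k * (h k)^2 + bb k * (h k * |h k|)))
        + ((g' i + lam' i * s + 2 * a i * h i + 2 * bb i * |h i|) * t
            + (a i + bb i * s) * t^2) := by
    rw [← Finset.add_sum_erase _ _ (Finset.mem_univ i), ← Finset.add_sum_erase _ _ (Finset.mem_univ i)]
    have herase : ∑ k ∈ Finset.univ.erase i, (g' k * (h k + t * (if k = i then 1 else 0))
        + lam' k * |h k + t * (if k = i then 1 else 0)|
        + a k * (h k + t * (if k = i then 1 else 0))^2
        + bb k * ((h k + t * (if k = i then 1 else 0)) * |h k + t * (if k = i then 1 else 0)|))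
        = ∑ k ∈ Finset.univ.erase i, (g' k * h k + lam' k * |h k| + a k * (h k)^2 + bb k * (h k * |h k|)) := by
      apply Finset.sum_congr rfl
      intro k hk
      have hki : k ≠ i := Finset.ne_of_mem_erase hk
      rw [hnew k, if_neg hki]
    rw [herase, hnew i, if_pos rfl, habs1, habs2]
    ring
  -- quadratic sum
  have hrow : ∀ j, (∑ k, A j k * (h k + t * (if k = i then 1 else 0)))
      = (∑ k, A j k * h k) + t * A j i := by
    intro j
    have : ∀ k, A j k * (h k + t * (if k = i then 1 else 0))
        = A j k * h k + (if k = i then t * A j k else 0) := by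
      intro k
      by_cases hk : k = i <;> simp [hk] <;> ring
    rw [Finset.sum_congr rfl fun k _ => this k, Finset.sum_add_distrib, Finset.sum_ite_eq']
    simp [mul_comm]
  have hquad : ∑ j, (∑ k, A j k * (h k + t * (if k = i then 1 else 0)))^2
      = ∑ j, (∑ k, A j k * h k)^2 + t * (2 * ∑ j, (∑ k, A j k * h k) * A j i)
        + t^2 * ∑ j, (A j i)^2 := by
    rw [Finset.sum_congr rfl fun j _ => congrArg (· ^ 2) (hrow j)]
    have expand : ∀ j : Fin m, ((∑ k, A j k * h k) + t * A j i)^2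
        = (∑ k, A j k * h k)^2 + t * (2 * ((∑ k, A j k * h k) * A j i))
          + t^2 * (A j i)^2 := fun j => by ring
    rw [Finset.sum_congr rfl fun j _ => expand j]
    rw [Finset.sum_add_distrib, Finset.sum_add_distrib, ← Finset.mul_sum, ← Finset.mul_sum,
      ← Finset.mul_sum]
  unfold modelF
  rw [hpen, hquad]
  ring

lemma model_sigma_form {n m : ℕ} (A : Matrix (Fin m) (Fin n) ℝ) (μ : ℝ)
    (g' lam' a bb : Fin n → ℝ) (h : Fin n → ℝ) :
    modelF A μ g' lam' a bb h
      = (∑ i, (g' i + lam' i * (SignType.sign (h i) : ℝ)) * h i)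
        + 2⁻¹ * ∑ i, h i * (∑ k, ((2*μ*(∑ j, A j i * A j k))
            + (if i = k then 2*(a i + bb i * (SignType.sign (h i) : ℝ)) else 0)) * h k) := by
  classical
  have hsplit : ∀ i, (∑ k, ((2*μ*(∑ j, A j i * A j k))
        + (if i = k then 2*(a i + bb i * (SignType.sign (h i) : ℝ)) else 0)) * h k)
      = 2*μ*(∑ k, (∑ j, A j i * A j k) * h k)
        + 2*(a i + bb i * (SignType.sign (h i) : ℝ)) * h i := by
    intro i
    have e1 : ∀ k, ((2*μ*(∑ j, A j i * A j k))
        + (if i = k then 2*(a i + bb i * (SignType.sign (h i) : ℝ)) else 0)) * h k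
        = 2*μ*((∑ j, A j i * A j k) * h k)
          + (if i = k then 2*(a i + bb i * (SignType.sign (h i) : ℝ)) * h k else 0) := by
      intro k
      by_cases hk : i = k <;> simp [hk] <;> ring
    rw [Finset.sum_congr rfl fun k _ => e1 k, Finset.sum_add_distrib, ← Finset.mul_sum,
      Finset.sum_ite_eq]
    simp
  have hdd : ∑ i, h i * ∑ k, (∑ j, A j i * A j k) * h k = ∑ j, (∑ k, A j k * h k)^2 := by
    have step1 : ∀ i, h i * ∑ k, (∑ j, A j i * A j k) * h k
        = ∑ k, ∑ j, (A j i * h i) * (A j k * h k) := by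
      intro i
      rw [Finset.mul_sum]
      apply Finset.sum_congr rfl
      intro k _
      rw [Finset.sum_mul, Finset.mul_sum]
      exact Finset.sum_congr rfl fun j _ => by ring
    rw [Finset.sum_congr rfl fun i _ => step1 i]
    have step2 : ∀ i, ∑ k, ∑ j, (A j i * h i) * (A j k * h k)
        = ∑ j, ∑ k, (A j i * h i) * (A j k * h k) := fun i => Finset.sum_comm
    rw [Finset.sum_congr rfl fun i _ => step2 i, Finset.sum_comm]
    apply Finset.sum_congr rfl
    intro j _
    rw [← Finset.sum_mul_sum]
    ring
  have e2 : ∀ i, h i * (∑ k, ((2*μ*(∑ j, A j i * A j k))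
        + (if i = k then 2*(a i + bb i * (SignType.sign (h i) : ℝ)) else 0)) * h k)
      = 2*μ*(h i * ∑ k, (∑ j, A j i * A j k) * h k)
        + (2*(a i * (h i)^2) + 2*(bb i * (h i * |h i|))) := by
    intro i
    rw [hsplit i, ← sign_mul_self (h i)]
    ring
  rw [Finset.sum_congr rfl fun i _ => e2 i]
  simp only [Finset.sum_add_distrib]
  rw [← Finset.mul_sum, ← Finset.mul_sum, ← Finset.mul_sum, hdd]
  have e3 : ∀ i, (g' i + lam' i * (SignType.sign (h i) : ℝ)) * h i
      = g' i * h i + lam' i * |h i| := by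
    intro i
    rw [← sign_mul_self (h i)]
    ring
  rw [Finset.sum_congr rfl fun i _ => e3 i]
  unfold modelF
  simp only [Finset.sum_add_distrib]
  ring

lemma inner_single_one {n : ℕ} (ξ : EuclideanSpace ℝ (Fin n)) (i : Fin n) :
    ⟪ξ, EuclideanSpace.single i (1:ℝ)⟫ = ξ i := by
  simp only [PiLp.inner_apply, RCLike.inner_apply, conj_trivial, EuclideanSpace.single_apply]
  rw [Finset.sum_congr rfl (fun k (_ : k ∈ Finset.univ) => by
    rw [ite_mul, one_mul, zero_mul] : ∀ k ∈ Finset.univ, (if k = i then (1:ℝ) else 0) * ξ k = if k = i then ξ k else 0)]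
  rw [Finset.sum_ite_eq']
  simp

lemma extraction {n : ℕ} (F : EuclideanSpace ℝ (Fin n) → ℝ) (x ξ : EuclideanSpace ℝ (Fin n))
    (hsub : 0 ≤ Filter.liminf (fun y => (F y - F x - ⟪ξ, y - x⟫) / ‖y - x‖) (𝓝[≠] x))
    (L r0 : ℝ) (hr0 : 0 < r0)
    (hlip : ∀ y : EuclideanSpace ℝ (Fin n), ‖y - x‖ < r0 → |F y - F x| ≤ L * ‖y - x‖)
    (i : Fin n) (D E T : ℝ) (hT : 0 < T)
    (hline : ∀ t : ℝ, t ≠ 0 → |t| < T →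
      F (x + t • EuclideanSpace.single i (1:ℝ)) - F x = D * t + E * t^2) :
    ξ i = D := by
  classical
  set u : EuclideanSpace ℝ (Fin n) → ℝ := fun y => (F y - F x - ⟪ξ, y - x⟫) / ‖y - x‖ with hu
  have hSmem : ∀ᶠ y in 𝓝[≠] x, -(L + ‖ξ‖) ≤ u y := by
    rw [eventually_nhdsWithin_iff, Metric.eventually_nhds_iff]
    refine ⟨r0, hr0, ?_⟩
    intro y hy hyx
    have hyne : y ≠ x := hyx
    have hpos : 0 < ‖y - x‖ := by rw [norm_pos_iff, sub_ne_zero]; exact hyne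
    have hdist : ‖y - x‖ < r0 := by rwa [dist_eq_norm] at hy
    have h1 := hlip y hdist
    have h2 : |⟪ξ, y - x⟫| ≤ ‖ξ‖ * ‖y - x‖ := abs_real_inner_le_norm _ _
    have h1' := abs_le.1 h1
    have h2' := abs_le.1 h2
    rw [hu]
    simp only []
    rw [le_div_iff₀ hpos]
    nlinarith [h1'.1, h2'.2]
  have hevent : ∀ δ : ℝ, 0 < δ → ∃ r > 0, ∀ y : EuclideanSpace ℝ (Fin n),
      y ≠ x → dist y x < r → -δ < u y := by
    intro δ hδ
    have hne : {a : ℝ | ∀ᶠ y in 𝓝[≠] x, a ≤ u y}.Nonempty := ⟨-(L + ‖ξ‖), hSmem⟩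
    rw [Filter.liminf_eq] at hsub
    obtain ⟨aa, haa, hlt⟩ := exists_lt_of_lt_csSup hne
      (lt_of_lt_of_le (by linarith : -δ < (0:ℝ)) hsub)
    have haa' : ∀ᶠ y in 𝓝[≠] x, aa ≤ u y := haa
    rw [eventually_nhdsWithin_iff, Metric.eventually_nhds_iff] at haa'
    obtain ⟨r, hr, hry⟩ := haa'
    refine ⟨r, hr, fun y hyx hyr => lt_of_lt_of_le hlt (hry hyr ?_)⟩
    simpa using hyx
  have hpt : ∀ δ : ℝ, 0 < δ → ∃ r > 0, ∀ t : ℝ, t ≠ 0 → |t| < min r T →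
      -δ * |t| < (D - ξ i) * t + E * t^2 := by
    intro δ hδ
    obtain ⟨r, hr, hbound⟩ := hevent δ hδ
    refine ⟨r, hr, ?_⟩
    intro t ht0 htr
    set y : EuclideanSpace ℝ (Fin n) := x + t • EuclideanSpace.single i (1:ℝ) with hy
    have hysub : y - x = t • EuclideanSpace.single i (1:ℝ) := by rw [hy]; abel
    have hnorm : ‖y - x‖ = |t| := by
      rw [hysub, norm_smul, EuclideanSpace.norm_single]
      simp [Real.norm_eq_abs]
    have hyne : y ≠ x := by
      intro hcon
      have h0 : ‖y - x‖ = 0 := by rw [hcon, sub_self, norm_zero]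
      rw [hnorm] at h0
      exact ht0 (abs_eq_zero.1 h0)
    have hinner : ⟪ξ, y - x⟫ = t * ξ i := by
      rw [hysub, real_inner_smul_right, inner_single_one]
    have hub := hbound y hyne (by rw [dist_eq_norm, hnorm]; exact lt_of_lt_of_le htr (min_le_left _ _))
    rw [hu] at hub
    simp only [] at hub
    rw [hnorm, hinner, hline t ht0 (lt_of_lt_of_le htr (min_le_right _ _))] at hub
    rw [lt_div_iff₀ (abs_pos.2 ht0)] at hub
    nlinarith [hub]
  have hkey : ∀ δ : ℝ, 0 < δ → |D - ξ i| ≤ δ := by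
    intro δ hδ
    obtain ⟨r, hr, hb⟩ := hpt δ hδ
    set w := D - ξ i with hw
    have hrT : 0 < min r T := lt_min hr hT
    have h1 : -δ ≤ w := by
      by_contra hcon
      push_neg at hcon
      have hwd : 0 < -δ - w := by linarith
      set t0 := min (min r T / 2) ((-δ - w) / (2 * (|E| + 1))) with ht0def
      have ht0pos : 0 < t0 := lt_min (by linarith) (by positivity)
      have ht0lt : t0 < min r T := lt_of_le_of_lt (min_le_left _ _) (by linarith)
      have habs : |t0| = t0 := abs_of_pos ht0pos
      have hineq := hb t0 (ne_of_gt ht0pos) (by rw [habs]; exact ht0lt)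
      rw [habs] at hineq
      have hEt : E * t0 ≤ |E| * t0 := mul_le_mul_of_nonneg_right (le_abs_self E) (le_of_lt ht0pos)
      have ht0le : t0 ≤ (-δ - w) / (2 * (|E| + 1)) := min_le_right _ _
      have hEb : |E| * t0 ≤ (-δ - w) / 2 := by
        have hE1 : (0:ℝ) < |E| + 1 := by positivity
        calc |E| * t0 ≤ |E| * ((-δ - w)/(2*(|E|+1))) :=
              mul_le_mul_of_nonneg_left ht0le (abs_nonneg E)
          _ ≤ (|E| + 1) * ((-δ - w)/(2*(|E|+1))) := by
              apply mul_le_mul_of_nonneg_right (by linarith)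
              positivity
          _ = (-δ - w)/2 := by field_simp
      nlinarith [hineq, hEt, hEb, ht0pos]
    have h2 : w ≤ δ := by
      by_contra hcon
      push_neg at hcon
      have hwd : 0 < w - δ := by linarith
      set t0 := min (min r T / 2) ((w - δ) / (2 * (|E| + 1))) with ht0def
      have ht0pos : 0 < t0 := lt_min (by linarith) (by positivity)
      have ht0lt : t0 < min r T := lt_of_le_of_lt (min_le_left _ _) (by linarith)
      have habs : |(-t0)| = t0 := by rw [abs_neg, abs_of_pos ht0pos]
      have hineq := hb (-t0) (by intro hc; exact (ne_of_gt ht0pos) (by linarith [neg_eq_zero.1 hc])) (by rw [habs]; exact ht0lt)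
      rw [habs] at hineq
      have hEt : E * t0 ≤ |E| * t0 := mul_le_mul_of_nonneg_right (le_abs_self E) (le_of_lt ht0pos)
      have ht0le : t0 ≤ (w - δ) / (2 * (|E| + 1)) := min_le_right _ _
      have hEb : |E| * t0 ≤ (w - δ) / 2 := by
        calc |E| * t0 ≤ |E| * ((w - δ)/(2*(|E|+1))) :=
              mul_le_mul_of_nonneg_left ht0le (abs_nonneg E)
          _ ≤ (|E| + 1) * ((w - δ)/(2*(|E|+1))) := by
              apply mul_le_mul_of_nonneg_right (by linarith)
              positivity
          _ = (w - δ)/2 := by field_simp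
      nlinarith [hineq, hEt, hEb, ht0pos]
    exact abs_le.2 ⟨h1, h2⟩
  by_contra hne2
  have hDξ : D - ξ i ≠ 0 := sub_ne_zero.2 (fun hc => hne2 hc.symm)
  have hpos : 0 < |D - ξ i| := abs_pos.2 hDξ
  have := hkey (|D - ξ i| / 2) (by positivity)
  linarith

end AuxKL

/-- The SCAD-regularized least squares objective
`F(x) = μ‖Ax − b‖² + Σᵢ r_{λ,γ}(xᵢ)` satisfies the KL inequality with exponent
`1/2` around every local minimizer. -/
theorem scad_LS_KL_exponent_half
    (m n : ℕ) (A : Matrix (Fin m) (Fin n) ℝ) (b : Fin m → ℝ)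
    (μ lam γ : ℝ) (hμ : 0 < μ) (hlam : 0 < lam) (hγ : 2 < γ) :
    let F : EuclideanSpace ℝ (Fin n) → ℝ :=
      fun x => μ * ∑ j, (A.mulVec x j - b j) ^ 2 + ∑ i, scadPenalty lam γ (x i)
    ∀ xbar : EuclideanSpace ℝ (Fin n), IsLocalMin F xbar →
      ∃ c > (0 : ℝ), ∃ ε > (0 : ℝ), ∃ η > (0 : ℝ),
        ∀ x : EuclideanSpace ℝ (Fin n),
          ‖x - xbar‖ < ε → F xbar < F x → F x < F xbar + η →
            ∀ ξ : EuclideanSpace ℝ (Fin n), IsFrechetSubgradient F x ξ →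
              c * Real.sqrt (F x - F xbar) ≤ ‖ξ‖ := by
  intro F xbar _hmin
  classical
  have hμ' : 0 ≤ μ := le_of_lt hμ
  have hFdef : ∀ y : EuclideanSpace ℝ (Fin n),
      F y = μ * ∑ j, ((∑ k, A j k * y k) - b j) ^ 2 + ∑ i, scadPenalty lam γ (y i) := by
    intro y
    show μ * ∑ j, (A.mulVec y j - b j) ^ 2 + ∑ i, scadPenalty lam γ (y i) = _
    have hmv : ∀ j, A.mulVec y j = ∑ k, A j k * y k := by
      intro j
      simp [Matrix.mulVec, dotProduct]
    rw [Finset.sum_congr rfl fun j _ => by rw [hmv j]]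
  choose ρ hρpos g lam' a bb hexp using fun i => scad_expand lam γ hlam hγ (xbar i)
  set gA : Fin n → ℝ := fun i => 2 * μ * ∑ j, ((∑ k, A j k * xbar k) - b j) * A j i with hgAdef
  set g' : Fin n → ℝ := fun i => gA i + g i with hg'def
  have hP0ex : ∃ P0 : ℝ, 0 < P0 ∧ P0 ≤ 1 ∧ ∀ i, P0 ≤ ρ i := by
    rcases isEmpty_or_nonempty (Fin n) with he | hne
    · exact ⟨1, one_pos, le_refl 1, fun i => (he.false i).elim⟩
    · refine ⟨min 1 (Finset.univ.inf' Finset.univ_nonempty ρ), ?_, min_le_left _ _, ?_⟩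
      · refine lt_min one_pos ?_
        rw [Finset.lt_inf'_iff]
        exact fun i _ => hρpos i
      · intro i
        exact le_trans (min_le_right _ _) (Finset.inf'_le _ (Finset.mem_univ i))
  obtain ⟨P0, hP0pos, hP0le1, hP0ρ⟩ := hP0ex
  have hform : ∀ y : EuclideanSpace ℝ (Fin n), (∀ i, |y i - xbar i| < ρ i) →
      F y = F xbar + modelF A μ g' lam' a bb (fun i => y i - xbar i) := by
    intro y hy
    rw [hFdef y, hFdef xbar]
    exact modelF_eq A b μ lam γ (fun i => xbar i) ρ g lam' a bb hexp gA (fun i => rfl)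
      (fun i => y i) hy
  obtain ⟨L, hL⟩ := model_lip A μ hμ' g' lam' a bb
  have hcoordgen : ∀ (z : EuclideanSpace ℝ (Fin n)) (i : Fin n), |z i - xbar i| ≤ ‖z - xbar‖ := by
    intro z i
    have := coord_abs_le_norm (z - xbar) i
    simpa using this
  have hlipF : ∀ x' y : EuclideanSpace ℝ (Fin n), ‖x' - xbar‖ < P0 → ‖y - xbar‖ < P0 →
      |F y - F x'| ≤ L * ‖y - x'‖ := by
    intro x' y hx' hy
    have hcx : ∀ i, |x' i - xbar i| ≤ 1 :=
      fun i => le_trans (le_of_lt (lt_of_le_of_lt (hcoordgen x' i) hx')) hP0le1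
    have hcy : ∀ i, |y i - xbar i| ≤ 1 :=
      fun i => le_trans (le_of_lt (lt_of_le_of_lt (hcoordgen y i) hy)) hP0le1
    have hcxρ : ∀ i, |x' i - xbar i| < ρ i :=
      fun i => lt_of_lt_of_le (lt_of_le_of_lt (hcoordgen x' i) hx') (hP0ρ i)
    have hcyρ : ∀ i, |y i - xbar i| < ρ i :=
      fun i => lt_of_lt_of_le (lt_of_le_of_lt (hcoordgen y i) hy) (hP0ρ i)
    have hdiffc : ∀ i, |(y i - xbar i) - (x' i - xbar i)| ≤ ‖y - x'‖ := by
      intro i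
      have h3 := coord_abs_le_norm (y - x') i
      have h2 : (y - x') i = y i - x' i := by simp
      rw [h2] at h3
      have h4 : (y i - xbar i) - (x' i - xbar i) = y i - x' i := by ring
      rw [h4]
      exact h3
    rw [hform y hcyρ, hform x' hcxρ]
    have heq : F xbar + modelF A μ g' lam' a bb (fun i => y i - xbar i)
        - (F xbar + modelF A μ g' lam' a bb (fun i => x' i - xbar i))
        = modelF A μ g' lam' a bb (fun i => y i - xbar i)
          - modelF A μ g' lam' a bb (fun i => x' i - xbar i) := by ring
    rw [heq]
    exact hL (fun i => x' i - xbar i) (fun i => y i - xbar i) hcx hcy ‖y - x'‖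
      (norm_nonneg _) hdiffc
  -- per-sigma constants
  set Gv : (Fin n → SignType) → Fin n → ℝ := fun σ i => g' i + lam' i * (σ i : ℝ) with hGv
  set Nv : (Fin n → SignType) → Fin n → Fin n → ℝ := fun σ i k =>
    2*μ*(∑ j, A j i * A j k) + (if i = k then 2*(a i + bb i * (σ i : ℝ)) else 0) with hNv
  have hNsym : ∀ σ, ∀ i k, Nv σ i k = Nv σ k i := by
    intro σ i k
    by_cases hik : i = k
    · subst hik; rfl
    · have hik' : ¬ (k = i) := fun hc => hik hc.symm
      show 2*μ*(∑ j, A j i * A j k) + _ = 2*μ*(∑ j, A j k * A j i) + _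
      rw [if_neg hik, if_neg hik', Finset.sum_congr rfl fun j _ => mul_comm (A j i) (A j k)]
  have hkeyall := fun σ : Fin n → SignType => key_sigma (Gv σ) (Nv σ) (hNsym σ) σ
  choose cf hcf εf hεf hkey using hkeyall
  have hσne : (Finset.univ : Finset (Fin n → SignType)).Nonempty := Finset.univ_nonempty
  refine ⟨Finset.univ.inf' hσne cf, ?_, min (P0 / 2) (Finset.univ.inf' hσne εf), ?_, 1,
    one_pos, ?_⟩
  · exact (Finset.lt_inf'_iff hσne).2 fun σ _ => hcf σ
  · exact lt_min (by positivity) ((Finset.lt_inf'_iff hσne).2 fun σ _ => hεf σ)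
  intro x hxε hFlow hFhigh ξ hξsub
  have hxP0 : ‖x - xbar‖ < P0 / 2 := lt_of_lt_of_le hxε (min_le_left _ _)
  have hcρ : ∀ i, |x i - xbar i| < ρ i := fun i =>
    lt_of_le_of_lt (hcoordgen x i) (lt_of_lt_of_le hxP0 (le_trans (by linarith) (hP0ρ i)))
  set σ : Fin n → SignType := fun i => SignType.sign (x i - xbar i) with hσdef
  set w : Fin n → ℝ := fun k => x k - xbar k with hwdef
  have hveq : F x - F xbar = modelF A μ g' lam' a bb w := by
    rw [hform x hcρ]
    ring
  -- extraction
  have hxi : ∀ i, w i ≠ 0 → ξ i = Gv σ i + ∑ k, Nv σ i k * w k := by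
    intro i hi
    have hlipx : ∀ y : EuclideanSpace ℝ (Fin n), ‖y - x‖ < P0/2 → |F y - F x| ≤ L * ‖y - x‖ := by
      intro y hy
      apply hlipF x y (lt_of_lt_of_le hxP0 (by linarith))
      calc ‖y - xbar‖ = ‖(y - x) + (x - xbar)‖ := by rw [sub_add_sub_cancel]
        _ ≤ ‖y - x‖ + ‖x - xbar‖ := norm_add_le _ _
        _ < P0/2 + P0/2 := by exact add_lt_add hy hxP0
        _ = P0 := by ring
    have hT : (0:ℝ) < min (|w i|) (P0/2) := lt_min (abs_pos.2 hi) (by positivity)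
    have hline : ∀ t : ℝ, t ≠ 0 → |t| < min (|w i|) (P0/2) →
        F (x + t • EuclideanSpace.single i (1:ℝ)) - F x
          = (g' i + lam' i * (SignType.sign (w i) : ℝ) + 2 * a i * w i + 2 * bb i * |w i|
              + 2 * μ * ∑ j, (∑ k, A j k * w k) * A j i) * t
            + (a i + bb i * (SignType.sign (w i) : ℝ) + μ * ∑ j, (A j i)^2) * t^2 := by
      intro t ht0 htT
      have ht1 : |t| < |w i| := lt_of_lt_of_le htT (min_le_left _ _)
      have ht2 : |t| < P0/2 := lt_of_lt_of_le htT (min_le_right _ _)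
      have hyc : ∀ k, (x + t • EuclideanSpace.single i (1:ℝ)) k - xbar k
          = w k + t * (if k = i then 1 else 0) := by
        intro k
        have : (x + t • EuclideanSpace.single i (1:ℝ)) k
            = x k + t * (if k = i then 1 else 0) := by
          simp [EuclideanSpace.single_apply]
        rw [this, hwdef]
        ring
      have hcoordy : ∀ k, |(x + t • EuclideanSpace.single i (1:ℝ)) k - xbar k| < ρ k := by
        intro k
        rw [hyc k]
        by_cases hk : k = i
        · subst hk
          rw [if_pos rfl, mul_one]
          have hwk : |w k| < P0/2 := lt_of_le_of_lt (hcoordgen x k) hxP0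
          calc |w k + t| ≤ |w k| + |t| := abs_add_le _ _
            _ < P0/2 + P0/2 := add_lt_add hwk ht2
            _ = P0 := by ring
            _ ≤ ρ k := hP0ρ k
        · rw [if_neg hk, mul_zero, add_zero]
          exact hcρ k
      have hfy := hform _ hcoordy
      have hfuneq : (fun k => (x + t • EuclideanSpace.single i (1:ℝ)) k - xbar k)
          = (fun k => w k + t * (if k = i then 1 else 0)) := funext hyc
      rw [hfuneq] at hfy
      rw [hfy, hform x hcρ]
      have hwx : (fun i => x i - xbar i) = w := rfl
      rw [hwx, model_line A μ g' lam' a bb w i t hi ht1]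
      ring
    have hD := extraction F x ξ hξsub L (P0/2) (by positivity) hlipx i _ _
      (min (|w i|) (P0/2)) hT hline
    rw [hD]
    -- convert D shape to Gv/Nv shape
    have hsplit2 : ∑ k, Nv σ i k * w k
        = 2*μ*(∑ k, (∑ j, A j i * A j k) * w k) + 2*(a i + bb i * (σ i : ℝ)) * w i := by
      have e1 : ∀ k, Nv σ i k * w k
          = 2*μ*((∑ j, A j i * A j k) * w k)
            + (if i = k then 2*(a i + bb i * (σ i : ℝ)) * w k else 0) := by
        intro k
        show (2*μ*(∑ j, A j i * A j k) + (if i = k then 2*(a i + bb i * (σ i : ℝ)) else 0)) * w k = _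
        by_cases hk : i = k
        · rw [if_pos hk, if_pos hk]; ring
        · rw [if_neg hk, if_neg hk]; ring
      rw [Finset.sum_congr rfl fun k _ => e1 k, Finset.sum_add_distrib, ← Finset.mul_sum,
        Finset.sum_ite_eq]
      simp
    have hswap : ∑ k, (∑ j, A j i * A j k) * w k = ∑ j, (∑ k, A j k * w k) * A j i := by
      have e2 : ∀ k, (∑ j, A j i * A j k) * w k = ∑ j, (A j i * A j k) * w k :=
        fun k => Finset.sum_mul _ _ _
      rw [Finset.sum_congr rfl fun k _ => e2 k, Finset.sum_comm]
      apply Finset.sum_congr rfl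
      intro j _
      rw [Finset.sum_mul]
      exact Finset.sum_congr rfl fun k _ => by ring
    have hσw : σ i = SignType.sign (w i) := rfl
    have hsgn : (σ i : ℝ) * w i = |w i| := by
      rw [hσw]
      exact sign_mul_self (w i)
    rw [hsplit2, hswap]
    show g' i + lam' i * (SignType.sign (w i) : ℝ) + 2 * a i * w i + 2 * bb i * |w i|
        + 2 * μ * ∑ j, (∑ k, A j k * w k) * A j i
      = (g' i + lam' i * (σ i : ℝ))
        + (2*μ*(∑ j, (∑ k, A j k * w k) * A j i) + 2*(a i + bb i * (σ i : ℝ)) * w i)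
    rw [← hsgn, hσw]
    ring
  -- apply key
  have hv0 : 0 < F x - F xbar := by linarith
  have hv1 : F x - F xbar < 1 := by linarith
  have hsign : ∀ i, SignType.sign ((x - xbar) i) = σ i := fun i => rfl
  have hnormε : ‖x - xbar‖ < εf σ :=
    lt_of_lt_of_le hxε (le_trans (min_le_right _ _) (Finset.inf'_le _ (Finset.mem_univ σ)))
  have hveqσ : F x - F xbar = (∑ i, Gv σ i * (x - xbar) i)
      + 2⁻¹ * ∑ i, (x - xbar) i * ∑ k, Nv σ i k * (x - xbar) k := by
    rw [hveq]
    exact model_sigma_form A μ g' lam' a bb w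
  have hxi' : ∀ i, (x - xbar) i ≠ 0 → ξ i = Gv σ i + ∑ k, Nv σ i k * (x - xbar) k :=
    fun i hi => hxi i hi
  have happ := hkey σ (x - xbar) ξ (F x - F xbar) hsign hnormε hv0 hv1 hveqσ hxi'
  calc Finset.univ.inf' hσne cf * Real.sqrt (F x - F xbar)
      ≤ cf σ * Real.sqrt (F x - F xbar) :=
        mul_le_mul_of_nonneg_right (Finset.inf'_le _ (Finset.mem_univ σ)) (Real.sqrt_nonneg _)
    _ ≤ ‖ξ‖ := happ
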